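/- Define f_zero : ℝ⁵ → ℝ by f_zero(x, y, p, q₁, q₂) = 45·(1−x) + 5·x + 50·y + (90·x − 45·(1−x))·p + (10·(1−x) − 5·x)·q₁ + (100·(1−y) − 50·y)·q₂. Then the supremum over (x, y) ∈ [0,1] × [0,1] of the infimum over (p, q₁, q₂) ∈ [1/10, 9/10]³ of f_zero(x, y, p, q₁, q₂) equals 131/2 (i.e., 65½). -/

import Mathlib

noncomputable def fZero (x y p q₁ q₂ : ℝ) : ℝ :=
  45 * (1 - x) + 5 * x + 50 * y + (90 * x - 45 * (1 - x)) * p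
    + (10 * (1 - x) - 5 * x) * q₁ + (100 * (1 - y) - 50 * y) * q₂

theorem zeroStickiness_optimal_value :
    sSup {v : ℝ | ∃ x ∈ Set.Icc (0 : ℝ) 1, ∃ y ∈ Set.Icc (0 : ℝ) 1,
        v = sInf {w : ℝ | ∃ p ∈ Set.Icc (1/10 : ℝ) (9/10), ∃ q₁ ∈ Set.Icc (1/10 : ℝ) (9/10),
          ∃ q₂ ∈ Set.Icc (1/10 : ℝ) (9/10), w = fZero x y p q₁ q₂}} = 131 / 2 := by
  apply IsGreatest.csSup_eq
  constructor
  · refine ⟨1/3, by norm_num, 2/3, by norm_num, ?_⟩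
    symm
    apply IsLeast.csInf_eq
    constructor
    · exact ⟨1/10, by norm_num, 1/10, by norm_num, 1/10, by norm_num, by
        simp only [fZero]; norm_num⟩
    · rintro w ⟨p, hp, q₁, hq₁, q₂, hq₂, rfl⟩
      simp only [fZero]
      nlinarith [hp.1, hp.2, hq₁.1, hq₁.2, hq₂.1, hq₂.2]
  · rintro v ⟨x, hx, y, hy, rfl⟩
    have hbdd : BddBelow {w : ℝ | ∃ p ∈ Set.Icc (1/10 : ℝ) (9/10),
        ∃ q₁ ∈ Set.Icc (1/10 : ℝ) (9/10),
        ∃ q₂ ∈ Set.Icc (1/10 : ℝ) (9/10), w = fZero x y p q₁ q₂} := by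
      refine ⟨-1000, ?_⟩
      rintro w ⟨p, hp, q₁, hq₁, q₂, hq₂, rfl⟩
      simp only [fZero]
      nlinarith [hx.1, hx.2, hy.1, hy.2, hp.1, hp.2, hq₁.1, hq₁.2, hq₂.1, hq₂.2,
        mul_nonneg (sub_nonneg.2 hx.1) (sub_nonneg.2 hp.1),
        mul_nonneg (sub_nonneg.2 hx.1) (sub_nonneg.2 hq₁.1),
        mul_nonneg (sub_nonneg.2 hy.1) (sub_nonneg.2 hq₂.1),
        mul_nonneg (sub_nonneg.2 hp.1) (sub_nonneg.2 hx.2),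
        mul_nonneg (sub_nonneg.2 hq₁.1) (sub_nonneg.2 hx.2),
        mul_nonneg (sub_nonneg.2 hq₂.1) (sub_nonneg.2 hy.2)]
    set P : ℝ := if (1:ℝ)/3 ≤ x then 1/10 else 9/10 with hP
    set Q₁ : ℝ := if x ≤ (2:ℝ)/3 then 1/10 else 9/10 with hQ₁
    set Q₂ : ℝ := if y ≤ (2:ℝ)/3 then 1/10 else 9/10 with hQ₂
    have hPm : P ∈ Set.Icc (1/10 : ℝ) (9/10) := by rw [hP]; split_ifs <;> norm_num
    have hQ₁m : Q₁ ∈ Set.Icc (1/10 : ℝ) (9/10) := by rw [hQ₁]; split_ifs <;> norm_num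
    have hQ₂m : Q₂ ∈ Set.Icc (1/10 : ℝ) (9/10) := by rw [hQ₂]; split_ifs <;> norm_num
    refine csInf_le_of_le hbdd ⟨P, hPm, Q₁, hQ₁m, Q₂, hQ₂m, rfl⟩ ?_
    simp only [fZero, hP, hQ₁, hQ₂]
    split_ifs with h1 h2 h3 h3 h2 h3 h3 <;>
      (try push_neg at *) <;>
      [skip; skip; skip; skip; skip; skip; skip; skip] <;>
      nlinarith [hx.1, hx.2, hy.1, hy.2]
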